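/- For every a₀ > 0, every c > 0, every G̃ > 0 and every integer M ≥ 2 there exists ε₀ ∈ (0,1) such that the following holds. Let e be an integer with e ≥ 1, let Ĵ : ℤ → ℂ satisfy |Ĵ(q)| ≥ c for all q ∉ {e, −e}, for each 2 ≤ n ≤ M let g_n : ℤ^n → ℂ satisfy |g_n| ≤ G̃ everywhere, and let P : ℤ → ℂ satisfy P(−q) = conj(P(q)) for all q ∈ ℤ, |P(q)| ≤ ε₀ for all q ∈ ℤ, |P(q)| ≤ a₀/q² for all q ≠ 0, and the harmonic-balance equation Ĵ(q)·P(q) = Σ_{n=2}^{M} S(g_n,n,P)(q) for all q ∉ {e, −e}. Then P(β) = 0 for every β ∈ ℤ that is not an integer multiple of e; i.e., only harmonics at frequencies that are multiples of the fundamental e can be nonzero. -/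

import Mathlib

/-- For `q : ℤ` and `k = (k₁, …, k_m) : Fin m → ℤ`, `diffs q k i` is the `i`-th successive
difference in the chain `q, k₁, k₂, …, k_m, 0`; i.e. `diffs q k 0 = q - k₁`,
`diffs q k i = kᵢ - k_{i+1}` for `1 ≤ i ≤ m - 1`, and `diffs q k m = k_m`. -/
def diffs (q : ℤ) {m : ℕ} (k : Fin m → ℤ) (i : ℕ) : ℤ :=
  (q :: (List.ofFn k ++ [0])).getD i 0 - (q :: (List.ofFn k ++ [0])).getD (i + 1) 0

/-- `Sg n g P q = Σ_{k₁,…,k_{n-1} ∈ ℤ} g(q,k₁,…,k_{n-1}) · P(q-k₁)·P(k₁-k₂)⋯P(k_{n-1})`,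
the convolution-type multiple series with kernel `g`. -/
noncomputable def Sg (n : ℕ) (g : (Fin n → ℤ) → ℂ) (P : ℤ → ℂ) (q : ℤ) : ℂ :=
  ∑' k : Fin (n - 1) → ℤ,
    g (fun i : Fin n => (q :: List.ofFn k).getD (i : ℕ) 0) *
      ∏ i ∈ Finset.range n, P (diffs q k i)

namespace Stmt11Aux

lemma getD_zero (q : ℤ) {m : ℕ} (k : Fin m → ℤ) :
    (q :: (List.ofFn k ++ [0])).getD 0 0 = q := rfl

lemma getD_succ_lt (q : ℤ) {m : ℕ} (k : Fin m → ℤ) {t : ℕ} (ht : t < m) :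
    (q :: (List.ofFn k ++ [0])).getD (t+1) 0 = k ⟨t, ht⟩ := by
  rw [List.getD_cons_succ]
  rw [List.getD_eq_getElem _ _ (by simpa using Nat.lt_add_right 1 ht)]
  rw [List.getElem_append_left (by simpa using ht)]
  simp

lemma getD_succ_ge (q : ℤ) {m : ℕ} (k : Fin m → ℤ) {t : ℕ} (ht : m ≤ t) :
    (q :: (List.ofFn k ++ [0])).getD (t+1) 0 = 0 := by
  rw [List.getD_cons_succ]
  rcases eq_or_lt_of_le ht with rfl | h
  · rw [List.getD_eq_getElem _ _ (by simp)]
    rw [List.getElem_append_right (by simp)]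
    simp
  · exact List.getD_eq_default _ _ (by simpa using h)

lemma sum_range_diffs (q : ℤ) {m : ℕ} (k : Fin m → ℤ) (r : ℕ) :
    ∑ i ∈ Finset.range r, diffs q k i = q - (q :: (List.ofFn k ++ [0])).getD r 0 := by
  simpa only [diffs, List.getD_cons_zero] using
    Finset.sum_range_sub' (fun i => (q :: (List.ofFn k ++ [0])).getD i 0) r

lemma sum_diffs (q : ℤ) {m : ℕ} (k : Fin m → ℤ) :
    ∑ i ∈ Finset.range (m+1), diffs q k i = q := by
  rw [sum_range_diffs, getD_succ_ge q k le_rfl, sub_zero]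

lemma k_eq_sum (q : ℤ) {m : ℕ} (k : Fin m → ℤ) (t : Fin m) :
    k t = ∑ i ∈ Finset.Ico ((t:ℕ)+1) (m+1), diffs q k i := by
  rw [Finset.sum_Ico_eq_sub _ (by omega), sum_range_diffs, sum_range_diffs,
    getD_succ_ge q k le_rfl, getD_succ_lt q k t.isLt]
  simp

lemma diffs_inj (q : ℤ) {m : ℕ} {i : ℕ} (hi : i ∈ Finset.range (m+1))
    {k k' : Fin m → ℤ}
    (h : ∀ j ∈ (Finset.range (m+1)).erase i, diffs q k j = diffs q k' j) :
    k = k' := by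
  have hall : ∀ j ∈ Finset.range (m+1), diffs q k j = diffs q k' j := by
    have hs : ∑ j ∈ (Finset.range (m+1)).erase i, diffs q k j
        = ∑ j ∈ (Finset.range (m+1)).erase i, diffs q k' j :=
      Finset.sum_congr rfl h
    have h1 := Finset.add_sum_erase _ (diffs q k) hi
    have h2 := Finset.add_sum_erase _ (diffs q k') hi
    rw [sum_diffs] at h1 h2
    intro j hj
    by_cases hji : j = i
    · subst hji; omega
    · exact h j (Finset.mem_erase.2 ⟨hji, hj⟩)
  funext t
  rw [k_eq_sum q k t, k_eq_sum q k' t]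
  refine Finset.sum_congr rfl fun j hj => hall j ?_
  simp only [Finset.mem_Ico] at hj
  exact Finset.mem_range.2 hj.2

lemma prod_w_sum_le (w : ℤ → ℝ) (hw0 : ∀ z, 0 ≤ w z) (hws : Summable w)
    (q : ℤ) {m : ℕ} {i : ℕ} (hi : i ∈ Finset.range (m+1))
    (s : Finset (Fin m → ℤ)) :
    ∑ k ∈ s, ∏ j ∈ (Finset.range (m+1)).erase i, w (diffs q k j)
      ≤ (∑' z, w z) ^ m := by
  classical
  set E := (Finset.range (m+1)).erase i with hE
  have hcard : Fintype.card {x // x ∈ E} = m := by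
    rw [Fintype.card_coe, hE, Finset.card_erase_of_mem hi, Finset.card_range]; omega
  set ψ : (Fin m → ℤ) → ({x // x ∈ E} → ℤ) := fun k j => diffs q k j.1 with hψ
  have hinj : Set.InjOn ψ ↑s := by
    intro k _ k' _ hkk'
    refine diffs_inj q hi (fun j hj => ?_)
    exact congrFun hkk' ⟨j, hj⟩
  have hprod : ∀ k : Fin m → ℤ,
      ∏ j ∈ E, w (diffs q k j) = ∏ j : {x // x ∈ E}, w (ψ k j) := by
    intro k
    rw [← Finset.prod_attach E (fun j => w (diffs q k j))]
    rfl
  calc ∑ k ∈ s, ∏ j ∈ E, w (diffs q k j)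
      = ∑ y ∈ s.image ψ, ∏ j : {x // x ∈ E}, w (y j) := by
        rw [Finset.sum_image (fun a ha b hb hab => hinj ha hb hab)]
        exact Finset.sum_congr rfl fun k _ => hprod k
    _ ≤ ∑ y ∈ Fintype.piFinset (fun j : {x // x ∈ E} => (s.image ψ).image (fun y' => y' j)),
          ∏ j : {x // x ∈ E}, w (y j) := by
        refine Finset.sum_le_sum_of_subset_of_nonneg ?_ (fun y _ _ => Finset.prod_nonneg fun j _ => hw0 _)
        intro y hy
        rw [Fintype.mem_piFinset]
        exact fun j => Finset.mem_image_of_mem _ hy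
    _ = ∏ j : {x // x ∈ E}, ∑ z ∈ (s.image ψ).image (fun y' => y' j), w z := by
        rw [Finset.prod_univ_sum]
    _ ≤ ∏ j : {x // x ∈ E}, ∑' z, w z := by
        refine Finset.prod_le_prod (fun j _ => Finset.sum_nonneg fun z _ => hw0 z)
          (fun j _ => Summable.sum_le_tsum _ (fun z _ => hw0 z) hws)
    _ = (∑' z, w z) ^ m := by rw [Finset.prod_const, Finset.card_univ, hcard]

lemma Sg_norm_le (Gb B : ℝ) (hGb : 0 ≤ Gb) (hB : 0 ≤ B)
    (w : ℤ → ℝ) (hw0 : ∀ z, 0 ≤ w z) (hws : Summable w)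
    (e q : ℤ) (hq : ¬ e ∣ q)
    (P : ℤ → ℂ) (hPw : ∀ z, ‖P z‖ ≤ w z) (hPB : ∀ z, ¬ e ∣ z → ‖P z‖ ≤ B)
    {m : ℕ} (g : (Fin (m+1) → ℤ) → ℂ) (hg : ∀ v, ‖g v‖ ≤ Gb) :
    ‖Sg (m+1) g P q‖ ≤ (m+1) * (Gb * B * (∑' z, w z) ^ m) := by
  classical
  set A := ∑' z, w z with hA
  have hA0 : 0 ≤ A := tsum_nonneg hw0
  set term : (Fin m → ℤ) → ℂ := fun k =>
    g (fun i : Fin (m+1) => (q :: List.ofFn k).getD (i : ℕ) 0) *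
      ∏ i ∈ Finset.range (m+1), P (diffs q k i) with hterm
  have hSg : Sg (m+1) g P q = ∑' k : Fin m → ℤ, term k := rfl
  have hbd : 0 ≤ ((m:ℝ)+1) * (Gb * B * A ^ m) := by positivity
  set H : ℕ → (Fin m → ℤ) → ℝ := fun i k =>
    if e ∣ diffs q k i then 0
    else Gb * B * ∏ j ∈ (Finset.range (m+1)).erase i, w (diffs q k j) with hH
  have hH0 : ∀ i k, 0 ≤ H i k := by
    intro i k
    simp only [hH]
    split
    · exact le_refl 0
    · exact mul_nonneg (mul_nonneg hGb hB) (Finset.prod_nonneg fun j _ => hw0 _)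
  have hHle : ∀ i k, H i k ≤ Gb * B * ∏ j ∈ (Finset.range (m+1)).erase i, w (diffs q k j) := by
    intro i k
    simp only [hH]
    split
    · exact mul_nonneg (mul_nonneg hGb hB) (Finset.prod_nonneg fun j _ => hw0 _)
    · exact le_refl _
  have hptw : ∀ k, ‖term k‖ ≤ ∑ i ∈ Finset.range (m+1), H i k := by
    intro k
    obtain ⟨i₀, hi₀, hbad⟩ : ∃ i ∈ Finset.range (m+1), ¬ e ∣ diffs q k i := by
      by_contra hcon
      push_neg at hcon
      exact hq (sum_diffs q k ▸ Finset.dvd_sum hcon)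
    have h1 : ‖term k‖ ≤ Gb * ∏ i ∈ Finset.range (m+1), ‖P (diffs q k i)‖ := by
      rw [hterm]
      simp only [norm_mul, norm_prod]
      exact mul_le_mul_of_nonneg_right (hg _) (Finset.prod_nonneg fun i _ => norm_nonneg _)
    have h2 : ∏ i ∈ Finset.range (m+1), ‖P (diffs q k i)‖
        ≤ B * ∏ j ∈ (Finset.range (m+1)).erase i₀, w (diffs q k j) := by
      rw [← Finset.mul_prod_erase _ _ hi₀]
      exact mul_le_mul (hPB _ hbad)
        (Finset.prod_le_prod (fun j _ => norm_nonneg _) (fun j _ => hPw _))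
        (Finset.prod_nonneg fun j _ => norm_nonneg _) hB
    have h3 : ‖term k‖ ≤ H i₀ k := by
      rw [hH]
      simp only [if_neg hbad]
      calc ‖term k‖ ≤ Gb * ∏ i ∈ Finset.range (m+1), ‖P (diffs q k i)‖ := h1
        _ ≤ Gb * (B * ∏ j ∈ (Finset.range (m+1)).erase i₀, w (diffs q k j)) :=
            mul_le_mul_of_nonneg_left h2 hGb
        _ = Gb * B * ∏ j ∈ (Finset.range (m+1)).erase i₀, w (diffs q k j) := by ring
    exact h3.trans (Finset.single_le_sum (fun i _ => hH0 i k) hi₀)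
  have hpartial : ∀ s : Finset (Fin m → ℤ),
      ∑ k ∈ s, ‖term k‖ ≤ ((m:ℝ)+1) * (Gb * B * A ^ m) := by
    intro s
    calc ∑ k ∈ s, ‖term k‖ ≤ ∑ k ∈ s, ∑ i ∈ Finset.range (m+1), H i k :=
          Finset.sum_le_sum fun k _ => hptw k
      _ = ∑ i ∈ Finset.range (m+1), ∑ k ∈ s, H i k := Finset.sum_comm
      _ ≤ ∑ i ∈ Finset.range (m+1), Gb * B * A ^ m := by
          refine Finset.sum_le_sum fun i hi => ?_
          calc ∑ k ∈ s, H i k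
              ≤ ∑ k ∈ s, Gb * B * ∏ j ∈ (Finset.range (m+1)).erase i, w (diffs q k j) :=
                Finset.sum_le_sum fun k _ => hHle i k
            _ = Gb * B * ∑ k ∈ s, ∏ j ∈ (Finset.range (m+1)).erase i, w (diffs q k j) := by
                rw [Finset.mul_sum]
            _ ≤ Gb * B * A ^ m :=
                mul_le_mul_of_nonneg_left (prod_w_sum_le w hw0 hws q hi s) (mul_nonneg hGb hB)
      _ = ((m:ℝ)+1) * (Gb * B * A ^ m) := by
          rw [Finset.sum_const, Finset.card_range, nsmul_eq_mul]
          push_cast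
          ring
  rw [hSg]
  by_cases hsum : Summable (fun k => ‖term k‖)
  · calc ‖∑' k, term k‖ ≤ ∑' k, ‖term k‖ := norm_tsum_le_tsum_norm hsum
      _ ≤ ((m:ℝ)+1) * (Gb * B * A ^ m) := Summable.tsum_le_of_sum_le hsum hpartial
      _ ≤ (m+1) * (Gb * B * A ^ m) := by push_cast; ring_nf; exact le_refl _
  · have : ¬ Summable term := fun h => hsum h.norm
    rw [tsum_eq_zero_of_not_summable this, norm_zero]
    calc (0:ℝ) ≤ ((m:ℝ)+1) * (Gb * B * A ^ m) := hbd
      _ ≤ (m+1) * (Gb * B * A ^ m) := by push_cast; exact le_refl _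

end Stmt11Aux

theorem stmt11 (a₀ c Gb : ℝ) (ha₀ : 0 < a₀) (hc : 0 < c) (hGb : 0 < Gb)
    (M : ℕ) (hM : 2 ≤ M) :
    ∃ ε₀ ∈ Set.Ioo (0 : ℝ) 1,
      ∀ e : ℤ, 1 ≤ e →
      ∀ J : ℤ → ℂ, (∀ q : ℤ, q ≠ e → q ≠ -e → c ≤ ‖J q‖) →
      ∀ g : (n : ℕ) → (Fin n → ℤ) → ℂ,
        (∀ n : ℕ, 2 ≤ n → n ≤ M → ∀ v : Fin n → ℤ, ‖g n v‖ ≤ Gb) →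
      ∀ P : ℤ → ℂ,
        (∀ q : ℤ, P (-q) = starRingEnd ℂ (P q)) →
        (∀ q : ℤ, ‖P q‖ ≤ ε₀) →
        (∀ q : ℤ, q ≠ 0 → ‖P q‖ ≤ a₀ / (q : ℝ) ^ 2) →
        (∀ q : ℤ, q ≠ e → q ≠ -e → J q * P q = ∑ n ∈ Finset.Icc 2 M, Sg n (g n) P q) →
        ∀ β : ℤ, ¬ e ∣ β → P β = 0 := by
  classical
  have hM0 : (0:ℝ) < (M:ℝ) := by exact_mod_cast (by omega : 0 < M)
  -- dominating summable weight
  set v : ℤ → ℝ := fun z => (if z = 0 then (1:ℝ) else 0)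
      + a₀ ^ ((2:ℝ)/3) * |(z:ℝ)| ^ (-(4/3:ℝ)) with hv
  have hv0 : ∀ z, 0 ≤ v z := by
    intro z
    refine add_nonneg ?_ (mul_nonneg (Real.rpow_nonneg ha₀.le _) (Real.rpow_nonneg (abs_nonneg _) _))
    split <;> norm_num
  have hv_sum : Summable v := by
    refine Summable.add ?_ ((Real.summable_abs_int_rpow (by norm_num : (1:ℝ) < 4/3)).mul_left _)
    refine summable_of_ne_finset_zero (s := {0}) ?_
    intro z hz
    simp only [Finset.mem_singleton] at hz
    simp [hz]
  set Sv := ∑' z, v z with hSv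
  have hSv0 : 0 ≤ Sv := tsum_nonneg hv0
  set δ : ℝ := c / (Gb * (M:ℝ)^2 + c) with hδ
  have hden : 0 < Gb * (M:ℝ)^2 + c := by positivity
  have hδpos : 0 < δ := div_pos hc hden
  have hδlt1 : δ < 1 := by
    rw [hδ, div_lt_one hden]
    have : 0 < Gb * (M:ℝ)^2 := by positivity
    linarith
  set ε₀ : ℝ := min (1/2) ((δ/(Sv+1))^3) with hε₀
  have hSv1 : 0 < Sv + 1 := by linarith
  have htpos : 0 < δ/(Sv+1) := div_pos hδpos hSv1
  have hε₀pos : 0 < ε₀ := lt_min (by norm_num) (by positivity)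
  have hε₀le1 : ε₀ ≤ 1 := le_trans (min_le_left _ _) (by norm_num)
  have hε3 : ε₀ ^ ((1:ℝ)/3) ≤ δ/(Sv+1) := by
    calc ε₀^((1:ℝ)/3) ≤ ((δ/(Sv+1))^3)^((1:ℝ)/3) :=
          Real.rpow_le_rpow hε₀pos.le (min_le_right _ _) (by norm_num)
      _ = δ/(Sv+1) := by
          rw [← Real.rpow_natCast (δ/(Sv+1)) 3, ← Real.rpow_mul htpos.le]
          norm_num
  refine ⟨ε₀, ⟨hε₀pos, lt_of_le_of_lt (min_le_left _ _) (by norm_num)⟩, ?_⟩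
  intro e he J hJ g hg P hsymm hPe hPa hHB β hβ
  -- the weight w
  set w : ℤ → ℝ := fun z => if z = 0 then ε₀ else min ε₀ (a₀ / (z:ℝ)^2) with hw
  have hw0 : ∀ z, 0 ≤ w z := by
    intro z
    simp only [hw]
    split
    · exact hε₀pos.le
    · exact le_min hε₀pos.le (by positivity)
  have hPw : ∀ z, ‖P z‖ ≤ w z := by
    intro z
    simp only [hw]
    split
    · exact hPe z
    · exact le_min (hPe z) (hPa z (by assumption))
  have hwv : ∀ z, w z ≤ ε₀^((1:ℝ)/3) * v z := by
    intro z
    by_cases hz : z = 0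
    · subst hz
      have hv0eq : v 0 = 1 := by
        simp only [hv, if_pos rfl, Int.cast_zero, abs_zero,
          Real.zero_rpow (by norm_num : (-(4/3:ℝ)) ≠ 0)]
        norm_num
      simp only [hw, if_pos rfl, hv0eq, mul_one]
      calc ε₀ = ε₀ ^ (1:ℝ) := (Real.rpow_one ε₀).symm
        _ ≤ ε₀ ^ ((1:ℝ)/3) := Real.rpow_le_rpow_of_exponent_ge hε₀pos hε₀le1 (by norm_num)
    · have hz2 : (0:ℝ) < (z:ℝ)^2 := by
        have : ((z:ℝ)) ≠ 0 := Int.cast_ne_zero.2 hz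
        positivity
      have hu : 0 < a₀/(z:ℝ)^2 := div_pos ha₀ hz2
      have hx : 0 < min ε₀ (a₀/(z:ℝ)^2) := lt_min hε₀pos hu
      have hxsplit : min ε₀ (a₀/(z:ℝ)^2)
          = (min ε₀ (a₀/(z:ℝ)^2))^((1:ℝ)/3) * (min ε₀ (a₀/(z:ℝ)^2))^((2:ℝ)/3) := by
        rw [← Real.rpow_add hx]; norm_num
      have h3 : (a₀/(z:ℝ)^2)^((2:ℝ)/3) = a₀^((2:ℝ)/3) * |(z:ℝ)|^(-(4/3:ℝ)) := by
        rw [Real.div_rpow ha₀.le (sq_nonneg _)]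
        rw [show ((z:ℝ)^2) = |(z:ℝ)|^2 from (sq_abs _).symm]
        rw [← Real.rpow_natCast |(z:ℝ)| 2, ← Real.rpow_mul (abs_nonneg _)]
        rw [div_eq_mul_inv, ← Real.rpow_neg (abs_nonneg _)]
        norm_num
      have hvz : v z = a₀^((2:ℝ)/3) * |(z:ℝ)|^(-(4/3:ℝ)) := by
        simp only [hv, if_neg hz]; ring
      simp only [hw, if_neg hz, hvz, ← h3]
      calc min ε₀ (a₀/(z:ℝ)^2)
          = (min ε₀ (a₀/(z:ℝ)^2))^((1:ℝ)/3) * (min ε₀ (a₀/(z:ℝ)^2))^((2:ℝ)/3) := hxsplit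
        _ ≤ ε₀^((1:ℝ)/3) * (a₀/(z:ℝ)^2)^((2:ℝ)/3) := by
            refine mul_le_mul (Real.rpow_le_rpow hx.le (min_le_left _ _) (by norm_num))
              (Real.rpow_le_rpow hx.le (min_le_right _ _) (by norm_num))
              (Real.rpow_nonneg hx.le _) (Real.rpow_nonneg hε₀pos.le _)
  have hws : Summable w :=
    Summable.of_nonneg_of_le hw0 hwv (hv_sum.mul_left _)
  set A := ∑' z, w z with hA
  have hA0 : 0 ≤ A := tsum_nonneg hw0
  have hAδ : A ≤ δ := by
    calc A ≤ ∑' z, ε₀^((1:ℝ)/3) * v z := Summable.tsum_le_tsum hwv hws (hv_sum.mul_left _)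
      _ = ε₀^((1:ℝ)/3) * Sv := tsum_mul_left
      _ ≤ (δ/(Sv+1)) * (Sv+1) :=
          mul_le_mul hε3 (by linarith) hSv0 htpos.le
      _ = δ := div_mul_cancel₀ _ (ne_of_gt hSv1)
  have hA1 : A ≤ 1 := hAδ.trans hδlt1.le
  -- the sup B
  set S : Set ℝ := {x | ∃ γ : ℤ, ¬ e ∣ γ ∧ ‖P γ‖ = x} with hS
  have hSne : S.Nonempty := ⟨‖P β‖, β, hβ, rfl⟩
  have hSbdd : BddAbove S := ⟨ε₀, by rintro x ⟨γ, _, rfl⟩; exact hPe γ⟩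
  set B := sSup S with hB
  have hBle : ∀ γ : ℤ, ¬ e ∣ γ → ‖P γ‖ ≤ B := fun γ h => le_csSup hSbdd ⟨γ, h, rfl⟩
  have hB0 : 0 ≤ B := le_trans (norm_nonneg _) (hBle β hβ)
  -- key estimate
  have key : ∀ q : ℤ, ¬ e ∣ q → c * ‖P q‖ ≤ (M:ℝ)^2 * Gb * δ * B := by
    intro q hq
    have hqe : q ≠ e := fun h => hq (h ▸ dvd_rfl)
    have hqe' : q ≠ -e := fun h => hq (h ▸ (dvd_neg).2 dvd_rfl)
    have step : ∀ n ∈ Finset.Icc 2 M, ‖Sg n (g n) P q‖ ≤ (M:ℝ) * (Gb * B * A) := by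
      intro n hn
      rw [Finset.mem_Icc] at hn
      obtain ⟨m, rfl⟩ : ∃ m, n = m + 2 := ⟨n - 2, by omega⟩
      have hgb : ∀ vv : Fin (m+2) → ℤ, ‖g (m+2) vv‖ ≤ Gb := hg (m+2) (by omega) hn.2
      have hle := Stmt11Aux.Sg_norm_le Gb B hGb.le hB0 w hw0 hws e q hq P hPw hBle (m := m+1)
        (g (m+2)) hgb
      have hpow : A^(m+1) ≤ A := by
        calc A^(m+1) ≤ A^1 := pow_le_pow_of_le_one hA0 hA1 (by omega)
          _ = A := pow_one A
      have hMn : ((m:ℝ)+1+1) ≤ (M:ℝ) := by exact_mod_cast (by omega : m + 2 ≤ M)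
      calc ‖Sg (m+2) (g (m+2)) P q‖ ≤ ((m+1:ℕ)+1) * (Gb * B * A^(m+1)) := hle
        _ ≤ (M:ℝ) * (Gb * B * A) := by
            push_cast
            have h1 : Gb * B * A^(m+1) ≤ Gb * B * A :=
              mul_le_mul_of_nonneg_left hpow (mul_nonneg hGb.le hB0)
            have h2 : 0 ≤ Gb * B * A^(m+1) := by positivity
            exact mul_le_mul hMn h1 h2 hM0.le
    calc c * ‖P q‖ ≤ ‖J q‖ * ‖P q‖ :=
          mul_le_mul_of_nonneg_right (hJ q hqe hqe') (norm_nonneg _)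
      _ = ‖J q * P q‖ := (norm_mul _ _).symm
      _ = ‖∑ n ∈ Finset.Icc 2 M, Sg n (g n) P q‖ := by rw [hHB q hqe hqe']
      _ ≤ ∑ n ∈ Finset.Icc 2 M, ‖Sg n (g n) P q‖ := norm_sum_le _ _
      _ ≤ ∑ _n ∈ Finset.Icc 2 M, (M:ℝ) * (Gb * B * A) := Finset.sum_le_sum step
      _ = ((Finset.Icc 2 M).card : ℝ) * ((M:ℝ) * (Gb * B * A)) := by
          rw [Finset.sum_const, nsmul_eq_mul]
      _ ≤ (M:ℝ) * ((M:ℝ) * (Gb * B * A)) := by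
          refine mul_le_mul_of_nonneg_right ?_ (by positivity)
          have : (Finset.Icc 2 M).card ≤ M := by
            rw [Nat.card_Icc]; omega
          exact_mod_cast this
      _ ≤ (M:ℝ)^2 * Gb * δ * B := by
          have h6 : (M:ℝ)^2*Gb*B*A ≤ (M:ℝ)^2*Gb*B*δ :=
            mul_le_mul_of_nonneg_left hAδ (by positivity)
          linarith
  -- conclude
  have hBB : B ≤ (M:ℝ)^2 * Gb * δ * B / c := by
    refine csSup_le hSne ?_
    rintro x ⟨γ, hγ, rfl⟩
    rw [le_div_iff₀ hc]
    calc ‖P γ‖ * c = c * ‖P γ‖ := mul_comm _ _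
      _ ≤ (M:ℝ)^2 * Gb * δ * B := key γ hγ
  have hr : (M:ℝ)^2 * Gb * δ < c := by
    rw [hδ, ← mul_div_assoc, div_lt_iff₀ hden]
    nlinarith
  have hcB : B * c ≤ (M:ℝ)^2 * Gb * δ * B := (le_div_iff₀ hc).1 hBB
  have hB_le : B ≤ 0 := by
    by_contra hpos
    push_neg at hpos
    have h1 := mul_lt_mul_of_pos_right hr hpos
    linarith
  have hPβ : ‖P β‖ = 0 := le_antisymm ((hBle β hβ).trans hB_le) (norm_nonneg _)
  exact norm_eq_zero.1 hPβ
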